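/- Let f be a nonnegative monotone submodular function and S* a finite set of size k. If each element of S* is independently included in a random subset Z with probability at least p (not necessarily equal probabilities, each at least p), then E[f(Z)] ≥ p · f(S*). -/
import Mathlib


theorem sampling_lemma_submodular {U : Type*} [Fintype U] [DecidableEq U]
    {Ω : Type*} [Fintype Ω]
    (f : Finset U → ℝ)
    (hnonneg : ∀ A, 0 ≤ f A)
    (hmono : ∀ A B : Finset U, A ⊆ B → f A ≤ f B)
    (hsub : ∀ A B : Finset U, A ⊆ B → ∀ x ∉ B,
      f (insert x A) - f A ≥ f (insert x B) - f B)
    (Sstar : Finset U) (k : ℕ) (hk : Sstar.card = k)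
    (w : Ω → ℝ) (hw : ∀ ω, 0 ≤ w ω) (hw1 : ∑ ω, w ω = 1)
    (Z : Ω → Finset U) (hZsub : ∀ ω, Z ω ⊆ Sstar)
    (p : ℝ) (hp0 : 0 ≤ p) (hp1 : p ≤ 1)
    (hmarg : ∀ a ∈ Sstar, (∑ ω, if a ∈ Z ω then w ω else 0) ≥ p)
    (hindep : ∀ T ⊆ Sstar,
      (∑ ω, if T ⊆ Z ω then w ω else 0)
        = ∏ a ∈ T, ∑ ω, if a ∈ Z ω then w ω else 0) :
    (∑ ω, w ω * f (Z ω)) ≥ p * f Sstar := by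
  have key : ∀ S : Finset U, S ⊆ Sstar →
      (∑ ω, w ω * f (Z ω ∩ S)) ≥ p * f S + (1 - p) * f ∅ := by
    intro S
    induction S using Finset.induction_on with
    | empty =>
      intro _
      simp only [Finset.inter_empty]
      rw [← Finset.sum_mul, hw1]
      ring_nf
      simp
    | @insert a S ha ih =>
      intro hsub'
      have haS : a ∈ Sstar := hsub' (Finset.mem_insert_self a S)
      have hS : S ⊆ Sstar := (Finset.subset_insert a S).trans hsub'
      have ihS := ih hS
      have hΔ : 0 ≤ f (insert a S) - f S := by
        have := hmono S (insert a S) (Finset.subset_insert a S)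
        linarith
      set Δ : ℝ := f (insert a S) - f S with hΔdef
      have hstep : ∀ ω, w ω * f (Z ω ∩ insert a S) ≥
          w ω * f (Z ω ∩ S) + (if a ∈ Z ω then w ω else 0) * Δ := by
        intro ω
        by_cases haZ : a ∈ Z ω
        · have heq : Z ω ∩ insert a S = insert a (Z ω ∩ S) := by
            ext x
            simp only [Finset.mem_inter, Finset.mem_insert]
            constructor
            · rintro ⟨hx, hx' | hx'⟩
              · left; exact hx'
              · right; exact ⟨hx, hx'⟩
            · rintro (rfl | ⟨hx, hx'⟩)
              · exact ⟨haZ, Or.inl rfl⟩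
              · exact ⟨hx, Or.inr hx'⟩
          rw [heq, if_pos haZ]
          have hsm := hsub (Z ω ∩ S) S Finset.inter_subset_right a ha
          have := hw ω
          nlinarith
        · have heq : Z ω ∩ insert a S = Z ω ∩ S := by
            ext x
            simp only [Finset.mem_inter, Finset.mem_insert]
            constructor
            · rintro ⟨hx, hx' | hx'⟩
              · exact absurd (hx' ▸ hx) haZ
              · exact ⟨hx, hx'⟩
            · rintro ⟨hx, hx'⟩; exact ⟨hx, Or.inr hx'⟩
          rw [heq, if_neg haZ]
          simp
      have hsum : (∑ ω, w ω * f (Z ω ∩ insert a S)) ≥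
          (∑ ω, w ω * f (Z ω ∩ S)) + (∑ ω, if a ∈ Z ω then w ω else 0) * Δ := by
        rw [Finset.sum_mul, ← Finset.sum_add_distrib]
        exact Finset.sum_le_sum (fun ω _ => hstep ω)
      have hm := hmarg a haS
      have hmΔ : (∑ ω, if a ∈ Z ω then w ω else 0) * Δ ≥ p * Δ :=
        mul_le_mul_of_nonneg_right hm hΔ
      have hfin : p * f (insert a S) + (1 - p) * f ∅ =
          (p * f S + (1 - p) * f ∅) + p * Δ := by
        rw [hΔdef]; ring
      linarith
  have h := key Sstar (Finset.Subset.refl Sstar)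
  have hZ : ∀ ω, Z ω ∩ Sstar = Z ω := fun ω => Finset.inter_eq_left.mpr (hZsub ω)
  simp only [hZ] at h
  have h0 : 0 ≤ (1 - p) * f ∅ := mul_nonneg (by linarith) (hnonneg ∅)
  linarith
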